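/- Let d be a positive integer. There exists a constant z ≥ 0 depending only on d with the following property: for every nonempty set X ⊆ ℝ^d there is a function f ∈ L(d) such that for all 0 ≤ v ≤ u, one has f(u, v+z) − z ≤ β_X(u,v) whenever v ≤ u − z, and β_X(u,v) ≤ f(u, v−z) + z whenever v ≥ z. -/

import Mathlib

open Metric Set Filter
open scoped ENNReal NNReal

noncomputable section

/-- Least number of closed balls of radius `r` needed to cover `E`. -/
def coveringNumber {X : Type*} [MetricSpace X] (r : ℝ) (E : Set X) : ℕ∞ :=
  sInf {n : ℕ∞ | ∃ s : Finset X, (s.card : ℕ∞) = n ∧ E ⊆ ⋃ x ∈ s, Metric.closedBall x r}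

/-- Packing number: the largest cardinality of a subset of `E` whose closed `2r`-balls are
pairwise disjoint. -/
def packingNumber {X : Type*} [MetricSpace X] (r : ℝ) (E : Set X) : ℕ∞ :=
  sSup {n : ℕ∞ | ∃ s : Finset X, (s.card : ℕ∞) = n ∧ ↑s ⊆ E ∧
    (s : Set X).Pairwise fun x y =>
      Disjoint (Metric.closedBall x (2 * r)) (Metric.closedBall y (2 * r))}

/-- Base-2 logarithm `ℕ∞ → ℝ≥0∞`, clamped below at `0`. -/
def elog2 (n : ℕ∞) : ℝ≥0∞ :=
  if n = ⊤ then ⊤ else ENNReal.ofReal (Real.logb 2 (n.toNat : ℝ))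

/-- The infimal two-scale branching function `β_X(u,v) = log₂ inf_x P_{2^{-u}}(B(x,2^{-v}))`. -/
def brL (X : Type*) [MetricSpace X] (u v : ℝ) : ℝ≥0∞ :=
  elog2 (⨅ x : X, packingNumber ((2 : ℝ) ^ (-u)) (Metric.closedBall x ((2 : ℝ) ^ (-v))))

/-- The supremal two-scale branching function `ν_X(u,v) = log₂ sup_x N_{2^{-u}}(B(x,2^{-v}))`. -/
def brU (X : Type*) [MetricSpace X] (u v : ℝ) : ℝ≥0∞ :=
  elog2 (⨆ x : X, coveringNumber ((2 : ℝ) ^ (-u)) (Metric.closedBall x ((2 : ℝ) ^ (-v))))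

/-- The lower spectrum `dim_L^θ X`, valued in `[0,∞]`. -/
def lowerSpectrum (X : Type*) [MetricSpace X] (θ : ℝ) : ℝ≥0∞ :=
  ⨆ s ∈ {s : ℝ | 0 ≤ s ∧ ∃ C : ℝ, 0 < C ∧ ∀ r : ℝ, 0 < r → r < 1 → ∀ x : X,
      ENNReal.ofReal (C * (r ^ (θ - 1)) ^ s) ≤
        (coveringNumber r (Metric.closedBall x (r ^ θ)) : ℝ≥0∞)},
    ENNReal.ofReal s

/-- The monotone (quasi-) lower spectrum. -/
def monoLowerSpectrum (X : Type*) [MetricSpace X] (θ : ℝ) : ℝ≥0∞ :=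
  ⨆ s ∈ {s : ℝ | 0 ≤ s ∧ ∃ C : ℝ, 0 < C ∧ ∀ r R : ℝ, 0 < r → r ≤ r ^ θ → r ^ θ ≤ R → R < 1 →
      ∀ x : X, ENNReal.ofReal (C * (R / r) ^ s) ≤
        (coveringNumber r (Metric.closedBall x R) : ℝ≥0∞)},
    ENNReal.ofReal s

/-- The class `L(α)`: functions on `Δ = {v ≤ u}` that are nonnegative, vanish on the diagonal,
are superadditive, and are `α`-Lipschitz in the first variable. -/
def MemL (α : ℝ) (f : ℝ → ℝ → ℝ) : Prop :=
  (∀ u v : ℝ, v ≤ u → 0 ≤ f u v) ∧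
  (∀ u : ℝ, f u u = 0) ∧
  (∀ u w v : ℝ, v ≤ w → w ≤ u → f u w + f w v ≤ f u v) ∧
  (∀ v u₁ u₂ : ℝ, v ≤ u₁ → v ≤ u₂ → |f u₁ v - f u₂ v| ≤ α * |u₁ - u₂|)

/-- The class `H(α)`: functions `(0,1] → [0,α]` satisfying (S) and (W). -/
def MemH (α : ℝ) (φ : ℝ → ℝ) : Prop :=
  (∀ θ : ℝ, 0 < θ → θ ≤ 1 → 0 ≤ φ θ ∧ φ θ ≤ α) ∧
  (∀ lam θ : ℝ, 0 < lam → lam ≤ 1 → 0 < θ → θ ≤ 1 → φ θ + θ * φ lam ≤ φ (lam * θ)) ∧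
  (∀ lam θ : ℝ, 0 < lam → lam ≤ 1 → 0 < θ → θ ≤ 1 → φ (lam * θ) ≤ (1 - θ) * α + θ * φ lam)

/-- The class `M(α)`: functions `(0,1] → [0,α]` satisfying (W) and (M). -/
def MemM (α : ℝ) (φ : ℝ → ℝ) : Prop :=
  (∀ θ : ℝ, 0 < θ → θ ≤ 1 → 0 ≤ φ θ ∧ φ θ ≤ α) ∧
  (∀ lam θ : ℝ, 0 < lam → lam ≤ 1 → 0 < θ → θ ≤ 1 → φ (lam * θ) ≤ (1 - θ) * α + θ * φ lam) ∧
  (∀ θ₁ θ₂ : ℝ, 0 < θ₁ → θ₁ ≤ θ₂ → θ₂ < 1 → φ θ₂ / (1 - θ₂) ≤ φ θ₁ / (1 - θ₁))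

/-- The normalized limit `Λ(f)(θ) = liminf_{u→∞} f(u, θu)/u` for real-valued `f`. -/
def Lam (f : ℝ → ℝ → ℝ) (θ : ℝ) : ℝ :=
  Filter.liminf (fun u => f u (θ * u) / u) Filter.atTop

/-- The normalized limit `Λ(g)(θ) = liminf_{u→∞} g(u, θu)/u` for `[0,∞]`-valued `g`. -/
def LamE (g : ℝ → ℝ → ENNReal) (θ : ℝ) : ℝ≥0∞ :=
  Filter.liminf (fun u => g u (θ * u) / ENNReal.ofReal u) Filter.atTop

/-- The two-piece affine function `φ_{α,λ,t}` through `(0,α)`, `(λ,t)` and `(1,0)`. -/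
def phiFun (α lam t : ℝ) : ℝ → ℝ := fun θ =>
  if θ ≤ lam then α + (θ / lam) * (t - α) else t * (1 - θ) / (1 - lam)

/-- The maximal element `h_{g,z}` of `L(α)` agreeing with `g` on the strip `{(u,z) : u ≥ z}`. -/
def hFun (α : ℝ) (g : ℝ → ℝ) (z : ℝ) : ℝ → ℝ → ℝ := fun u v =>
  if z ≤ v then g u - g v else α * (u - v)

/-- A metric space is `η`-uniform if `η(u)/u → 0` and `ν_X ≤ β_X + η(u)` on `Δ`. -/
def IsEtaUniform (η : ℝ → ℝ) (X : Type*) [MetricSpace X] : Prop :=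
  Filter.Tendsto (fun u => η u / u) Filter.atTop (nhds 0) ∧
  ∀ u v : ℝ, v ≤ u → brU X u v ≤ brL X u v + ENNReal.ofReal (η u)

/-- A metric space is uniform if it is `η`-uniform for some `η`. -/
def IsUniform (X : Type*) [MetricSpace X] : Prop := ∃ η : ℝ → ℝ, IsEtaUniform η X

/-- The relation `f ≍ g` between a real-valued and an `[0,∞]`-valued function on `Δ`. -/
def AsympRE (f : ℝ → ℝ → ℝ) (g : ℝ → ℝ → ENNReal) : Prop :=
  ∃ η : ℝ → ℝ, (∀ u : ℝ, 0 ≤ η u) ∧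
    Filter.Tendsto (fun u => η u / u) Filter.atTop (nhds 0) ∧
    ∀ u v : ℝ, 0 ≤ v → v ≤ u →
      (v ≤ u - η u → ENNReal.ofReal (f u (v + η u) - η u) ≤ g u v) ∧
      (η u ≤ v → g u v ≤ ENNReal.ofReal (f u (v - η u) + η u))

namespace BFA

variable {Y : Type*} [MetricSpace Y]

/-- A packing witness. -/
def IsPack (r : ℝ) (E : Set Y) (s : Finset Y) : Prop :=
  ↑s ⊆ E ∧ (s : Set Y).Pairwise fun x y =>
      Disjoint (Metric.closedBall x (2 * r)) (Metric.closedBall y (2 * r))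

lemma le_packingNumber {r : ℝ} {E : Set Y} {s : Finset Y} (h : IsPack r E s) :
    (s.card : ℕ∞) ≤ packingNumber r E :=
  le_sSup ⟨s, rfl, h.1, h.2⟩

lemma packingNumber_le {r : ℝ} {E : Set Y} {N : ℕ}
    (h : ∀ s : Finset Y, IsPack r E s → s.card ≤ N) : packingNumber r E ≤ (N : ℕ∞) := by
  apply sSup_le
  rintro n ⟨s, rfl, h1, h2⟩
  exact_mod_cast h s ⟨h1, h2⟩

lemma isPack_empty (r : ℝ) (E : Set Y) : IsPack r E (∅ : Finset Y) := by
  constructor <;> simp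

lemma exists_pack_max {r : ℝ} {E : Set Y} {N : ℕ}
    (h : ∀ s : Finset Y, IsPack r E s → s.card ≤ N) :
    ∃ s : Finset Y, IsPack r E s ∧ packingNumber r E = (s.card : ℕ∞) := by
  set A : Set ℕ := {n | ∃ s : Finset Y, IsPack r E s ∧ s.card = n} with hA
  have hne : A.Nonempty := ⟨0, ∅, isPack_empty r E, rfl⟩
  have hbdd : BddAbove A := by
    refine ⟨N, ?_⟩
    rintro n ⟨s, hs, rfl⟩
    exact h s hs
  obtain ⟨s, hs, hcard⟩ := Nat.sSup_mem hne hbdd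
  refine ⟨s, hs, le_antisymm ?_ ?_⟩
  · apply sSup_le
    rintro n ⟨t, rfl, h1, h2⟩
    have : t.card ≤ s.card := by
      rw [hcard]
      exact le_csSup hbdd ⟨t, ⟨h1, h2⟩, rfl⟩
    exact_mod_cast this
  · exact le_packingNumber hs

lemma packingNumber_mono_set {r : ℝ} {E E' : Set Y} (h : E ⊆ E') :
    packingNumber r E ≤ packingNumber r E' := by
  apply sSup_le
  rintro n ⟨s, rfl, h1, h2⟩
  exact le_sSup ⟨s, rfl, h1.trans h, h2⟩

lemma packingNumber_mono_r {r r' : ℝ} {E : Set Y} (h : r' ≤ r) :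
    packingNumber r E ≤ packingNumber r' E := by
  apply sSup_le
  rintro n ⟨s, rfl, h1, h2⟩
  refine le_sSup ⟨s, rfl, h1, fun x hx y hy hxy => ?_⟩
  exact (h2 hx hy hxy).mono (closedBall_subset_closedBall (by linarith))
    (closedBall_subset_closedBall (by linarith))

lemma one_le_packingNumber {r : ℝ} {E : Set Y} (hr : 0 ≤ 2 * r) (hE : E.Nonempty) :
    1 ≤ packingNumber r E := by
  obtain ⟨x, hx⟩ := hE
  have : IsPack r E {x} := by
    constructor
    · simp [hx]
    · simp
  simpa using le_packingNumber this

/-- centers of a packing are `2r`-separated. -/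
lemma pack_sep {r : ℝ} {E : Set Y} {s : Finset Y} (h : IsPack r E s) (hr : 0 ≤ r)
    {p q : Y} (hp : p ∈ s) (hq : q ∈ s) (hpq : p ≠ q) : 2 * r < dist p q := by
  by_contra hc
  push_neg at hc
  have h1 : p ∈ Metric.closedBall p (2 * r) := Metric.mem_closedBall_self (by linarith)
  have h2 : p ∈ Metric.closedBall q (2 * r) := by
    exact Metric.mem_closedBall.2 hc
  exact (Set.disjoint_left.1 (h.2 hp hq hpq)) h1 h2

end BFA

open MeasureTheory in
lemma BFA.card_le_of_separated {d : ℕ} (s : Finset (EuclideanSpace ℝ (Fin d)))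
    {c : EuclideanSpace ℝ (Fin d)} {R ρ : ℝ} (hρ : 0 < ρ) (hR : 0 ≤ R)
    (hmem : ∀ p ∈ s, p ∈ Metric.closedBall c R)
    (hsep : ∀ p ∈ s, ∀ q ∈ s, p ≠ q → 2 * ρ < dist p q) :
    (s.card : ℝ) ≤ ((R + ρ) / ρ) ^ d := by
  classical
  let V := EuclideanSpace ℝ (Fin d)
  let μ : Measure V := volume
  have hfin : Module.finrank ℝ V = d := by simp [V]
  have hb0 : μ (Metric.ball (0 : V) 1) ≠ 0 := (measure_ball_pos μ 0 one_pos).ne'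
  have hbt : μ (Metric.ball (0 : V) 1) ≠ ⊤ := measure_ball_lt_top.ne
  -- disjoint closed balls of radius ρ
  have hdisj : (↑s : Set V).PairwiseDisjoint (fun p => Metric.closedBall p ρ) := by
    intro p hp q hq hpq
    exact Metric.closedBall_disjoint_closedBall (by
      have := hsep p (Finset.mem_coe.1 hp) q (Finset.mem_coe.1 hq) hpq; linarith)
  have hsub : (⋃ p ∈ s, Metric.closedBall p ρ) ⊆ Metric.closedBall c (R + ρ) := by
    intro x hx
    simp only [Set.mem_iUnion] at hx
    obtain ⟨p, hp, hxp⟩ := hx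
    have h1 : dist x p ≤ ρ := Metric.mem_closedBall.1 hxp
    have h2 : dist p c ≤ R := Metric.mem_closedBall.1 (hmem p hp)
    exact Metric.mem_closedBall.2 ((dist_triangle x p c).trans (by linarith))
  have hvol : ∀ p : V, μ (Metric.closedBall p ρ) =
      ENNReal.ofReal (ρ ^ d) * μ (Metric.ball (0 : V) 1) := by
    intro p
    rw [Measure.addHaar_closedBall μ p hρ.le, hfin]
  have hsum : (s.card : ℝ≥0∞) * (ENNReal.ofReal (ρ ^ d) * μ (Metric.ball (0 : V) 1)) ≤
      ENNReal.ofReal ((R + ρ) ^ d) * μ (Metric.ball (0 : V) 1) := by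
    calc (s.card : ℝ≥0∞) * (ENNReal.ofReal (ρ ^ d) * μ (Metric.ball (0 : V) 1))
        = ∑ p ∈ s, μ (Metric.closedBall p ρ) := by
          rw [Finset.sum_congr rfl (fun p _ => hvol p), Finset.sum_const, nsmul_eq_mul]
      _ = μ (⋃ p ∈ s, Metric.closedBall p ρ) :=
          (measure_biUnion_finset hdisj (fun p _ => measurableSet_closedBall)).symm
      _ ≤ μ (Metric.closedBall c (R + ρ)) := measure_mono hsub
      _ = ENNReal.ofReal ((R + ρ) ^ d) * μ (Metric.ball (0 : V) 1) := by
          rw [Measure.addHaar_closedBall μ c (by linarith), hfin]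
  have hmul : (s.card : ℝ≥0∞) * ENNReal.ofReal (ρ ^ d) ≤ ENNReal.ofReal ((R + ρ) ^ d) := by
    rw [← mul_assoc] at hsum
    exact (ENNReal.mul_le_mul_iff_left hb0 hbt).1 hsum
  have hρd : 0 < ρ ^ d := pow_pos hρ d
  have : (s.card : ℝ≥0∞) ≤ ENNReal.ofReal ((R + ρ) ^ d / ρ ^ d) := by
    rw [ENNReal.ofReal_div_of_pos hρd]
    rw [ENNReal.le_div_iff_mul_le (Or.inl (by simp [ENNReal.ofReal_pos.2 hρd, ne_of_gt])) (Or.inl ENNReal.ofReal_ne_top)]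
    exact hmul
  have hcard : (s.card : ℝ) ≤ (R + ρ) ^ d / ρ ^ d := by
    have h2 := ENNReal.toReal_le_toReal (by simp) (by simp) |>.2 this
    simpa [ENNReal.toReal_ofReal (by positivity : (0:ℝ) ≤ (R + ρ) ^ d / ρ ^ d)] using h2
  calc (s.card : ℝ) ≤ (R + ρ) ^ d / ρ ^ d := hcard
    _ = ((R + ρ) / ρ) ^ d := by rw [div_pow]

namespace BFA

lemma rpow2_pos (x : ℝ) : 0 < (2:ℝ) ^ x := Real.rpow_pos_of_pos two_pos x

lemma rpow2_mono {a b : ℝ} (h : a ≤ b) : (2:ℝ) ^ a ≤ (2:ℝ) ^ b :=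
  Real.rpow_le_rpow_of_exponent_le one_le_two h

lemma rpow2_halves (v : ℝ) : (2:ℝ) ^ (-(v+1)) + (2:ℝ) ^ (-(v+1)) = (2:ℝ) ^ (-v) := by
  have h : (2:ℝ) ^ (-v) = (2:ℝ) ^ (-(v+1)) * (2:ℝ) ^ (1:ℝ) := by
    rw [← Real.rpow_add two_pos]
    ring_nf
  rw [h, Real.rpow_one]
  ring

variable {d : ℕ} (X : Set (EuclideanSpace ℝ (Fin d)))

/-- The infimal packing count at scales `(u, v)`. -/
def pk (u v : ℝ) : ℕ∞ :=
  ⨅ x : X, packingNumber ((2:ℝ) ^ (-u)) (Metric.closedBall x ((2:ℝ) ^ (-v)))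

/-- The real-valued branching function. -/
def bet (u v : ℝ) : ℝ := Real.logb 2 (((pk X u v).toNat : ℕ) : ℝ)

lemma pack_card_bound (u v : ℝ) (x : ↥X) (s : Finset ↥X)
    (hs : IsPack ((2:ℝ)^(-u)) (Metric.closedBall x ((2:ℝ)^(-v))) s) :
    (s.card : ℝ) ≤ ((2:ℝ) ^ (u - v) + 1) ^ d := by
  classical
  set t : Finset (EuclideanSpace ℝ (Fin d)) := s.map ⟨Subtype.val, Subtype.val_injective⟩ with ht
  have hcard : t.card = s.card := Finset.card_map _
  have hbd : (t.card : ℝ) ≤ (((2:ℝ)^(-v) + (2:ℝ)^(-u)) / (2:ℝ)^(-u)) ^ d := by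
    apply card_le_of_separated t (c := (x : EuclideanSpace ℝ (Fin d))) (rpow2_pos _)
      (rpow2_pos _).le
    · intro p hp
      rw [ht, Finset.mem_map] at hp
      obtain ⟨q, hq, rfl⟩ := hp
      have := hs.1 hq
      rw [Metric.mem_closedBall] at this ⊢
      rwa [Subtype.dist_eq] at this
    · intro p hp q hq hpq
      rw [ht, Finset.mem_map] at hp hq
      obtain ⟨p', hp', rfl⟩ := hp
      obtain ⟨q', hq', rfl⟩ := hq
      have hne : p' ≠ q' := fun h => hpq (by rw [h])
      have := pack_sep hs (rpow2_pos _).le hp' hq' hne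
      rwa [Subtype.dist_eq] at this
  have harith : (((2:ℝ)^(-v) + (2:ℝ)^(-u)) / (2:ℝ)^(-u)) = (2:ℝ) ^ (u - v) + 1 := by
    rw [add_div, div_self (rpow2_pos (-u)).ne', ← Real.rpow_sub two_pos,
      show -v - -u = u - v by ring]
  rw [hcard, harith] at hbd
  exact hbd

lemma packingNumber_le_ceil (u v : ℝ) (x : ↥X) :
    packingNumber ((2:ℝ)^(-u)) (Metric.closedBall x ((2:ℝ)^(-v)))
      ≤ ((⌈((2:ℝ) ^ (u - v) + 1) ^ d⌉₊ : ℕ) : ℕ∞) := by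
  apply packingNumber_le
  intro s hs
  have h1 := pack_card_bound X u v x s hs
  have h2 : (s.card : ℝ) ≤ (⌈((2:ℝ) ^ (u - v) + 1) ^ d⌉₊ : ℝ) := h1.trans (Nat.le_ceil _)
  exact_mod_cast h2

variable [Nonempty ↥X]

lemma pk_ne_top (u v : ℝ) : pk X u v ≠ ⊤ := by
  obtain ⟨x⟩ := (inferInstance : Nonempty ↥X)
  exact ((iInf_le _ x).trans_lt ((packingNumber_le_ceil X u v x).trans_lt
    (by exact_mod_cast ENat.coe_lt_top _))).ne

lemma one_le_pk (u v : ℝ) : 1 ≤ pk X u v := by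
  apply le_iInf
  intro x
  have : (Metric.closedBall x ((2:ℝ)^(-v))).Nonempty :=
    ⟨x, Metric.mem_closedBall_self (rpow2_pos _).le⟩
  exact one_le_packingNumber (by positivity) this

lemma one_le_toNat_pk (u v : ℝ) : 1 ≤ (pk X u v).toNat := by
  have := ENat.toNat_le_toNat (one_le_pk X u v) (pk_ne_top X u v)
  simpa using this

lemma toNat_pk_pos (a b : ℝ) : (0:ℝ) < ((pk X a b).toNat : ℝ) := by
  exact_mod_cast Nat.lt_of_lt_of_le Nat.zero_lt_one (one_le_toNat_pk X a b)

lemma bet_nonneg (u v : ℝ) : 0 ≤ bet X u v :=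
  Real.logb_nonneg one_lt_two (by exact_mod_cast one_le_toNat_pk X u v)

lemma bet_le_bet {a b a' b' : ℝ} (h : pk X a b ≤ pk X a' b') : bet X a b ≤ bet X a' b' := by
  have h1 := ENat.toNat_le_toNat h (pk_ne_top X a' b')
  have p1 : (0:ℝ) < ((pk X a b).toNat : ℝ) := toNat_pk_pos X a b
  have p2 : (0:ℝ) < ((pk X a' b').toNat : ℝ) := toNat_pk_pos X a' b'
  exact (Real.logb_le_logb one_lt_two p1 p2).2 (by exact_mod_cast h1)

lemma bet_mono_u {u₁ u₂ : ℝ} (v : ℝ) (h : u₁ ≤ u₂) : bet X u₁ v ≤ bet X u₂ v := by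
  apply bet_le_bet
  exact iInf_mono fun x => packingNumber_mono_r (rpow2_mono (neg_le_neg h))

lemma bet_anti_v {v₁ v₂ : ℝ} (u : ℝ) (h : v₁ ≤ v₂) : bet X u v₂ ≤ bet X u v₁ := by
  apply bet_le_bet
  exact iInf_mono fun x =>
    packingNumber_mono_set (Metric.closedBall_subset_closedBall (rpow2_mono (neg_le_neg h)))

lemma bet_triv {u v : ℝ} (h : u ≤ v) : bet X u v = 0 := by
  obtain ⟨x⟩ := (inferInstance : Nonempty ↥X)
  have hpk : pk X u v = 1 := by
    refine le_antisymm ?_ (one_le_pk X u v)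
    refine (iInf_le _ x).trans ?_
    have : packingNumber ((2:ℝ)^(-u)) (Metric.closedBall x ((2:ℝ)^(-v))) ≤ ((1:ℕ) : ℕ∞) := by
      apply packingNumber_le
      intro s hs
      rw [Finset.card_le_one]
      intro a ha b hb
      by_contra hne
      have h1 := pack_sep hs (rpow2_pos _).le ha hb hne
      have h2 : dist a b ≤ 2 * (2:ℝ)^(-v) := by
        have ha' := Metric.mem_closedBall.1 (hs.1 ha)
        have hb' := Metric.mem_closedBall.1 (hs.1 hb)
        calc dist a b ≤ dist a x + dist x b := dist_triangle _ _ _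
          _ ≤ (2:ℝ)^(-v) + (2:ℝ)^(-v) := by
              rw [dist_comm x b]; exact add_le_add ha' hb'
          _ = 2 * (2:ℝ)^(-v) := by ring
      have h3 : (2:ℝ)^(-v) ≤ (2:ℝ)^(-u) := rpow2_mono (neg_le_neg h)
      linarith
    exact_mod_cast this
  unfold bet
  rw [hpk]
  simp

end BFA
namespace BFA

variable {d : ℕ} (X : Set (EuclideanSpace ℝ (Fin d)))

lemma card_le_of_separated' (s : Finset ↥X) (c : ↥X) {R ρ : ℝ} (hρ : 0 < ρ) (hR : 0 ≤ R)
    (hmem : ∀ p ∈ s, dist p c ≤ R) (hsep : ∀ p ∈ s, ∀ q ∈ s, p ≠ q → 2 * ρ < dist p q) :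
    (s.card : ℝ) ≤ ((R + ρ) / ρ) ^ d := by
  classical
  set t : Finset (EuclideanSpace ℝ (Fin d)) := s.map ⟨Subtype.val, Subtype.val_injective⟩ with ht
  have hcard : t.card = s.card := Finset.card_map _
  rw [← hcard]
  apply card_le_of_separated t (c := (c : EuclideanSpace ℝ (Fin d))) hρ hR
  · intro p hp
    rw [ht, Finset.mem_map] at hp
    obtain ⟨q, hq, rfl⟩ := hp
    have h := hmem q hq
    rw [Subtype.dist_eq] at h
    exact h
  · intro p hp q hq hpq
    rw [ht, Finset.mem_map] at hp hq
    obtain ⟨p', hp', rfl⟩ := hp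
    obtain ⟨q', hq', rfl⟩ := hq
    have hne : p' ≠ q' := fun h => hpq (by rw [h])
    have := hsep p' hp' q' hq' hne
    rwa [Subtype.dist_eq] at this

lemma pack_card_nat (u v : ℝ) (x : ↥X) :
    ∀ s : Finset ↥X, IsPack ((2:ℝ)^(-u)) (Metric.closedBall x ((2:ℝ)^(-v))) s →
      s.card ≤ ⌈((2:ℝ) ^ (u - v) + 1) ^ d⌉₊ := by
  intro s hs
  have h1 := pack_card_bound X u v x s hs
  have h2 : (s.card : ℝ) ≤ (⌈((2:ℝ) ^ (u - v) + 1) ^ d⌉₊ : ℝ) := h1.trans (Nat.le_ceil _)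
  exact_mod_cast h2

lemma rpow2_four (u : ℝ) : 4 * (2:ℝ) ^ (-u) = (2:ℝ) ^ (-(u - 2)) := by
  have h4 : (2:ℝ) ^ ((2:ℕ):ℝ) = 4 := by rw [Real.rpow_natCast]; norm_num
  have : (2:ℝ) ^ (-(u - 2)) = (2:ℝ) ^ (-u) * (2:ℝ) ^ ((2:ℕ):ℝ) := by
    rw [← Real.rpow_add two_pos]
    norm_num
    ring_nf
  rw [this, h4]
  ring

variable [Nonempty ↥X]

lemma bet_super {u v w : ℝ} (h1 : v ≤ w) (h2 : w + 2 < u) :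
    bet X w (v+1) + bet X u (w+1) ≤ bet X u v := by
  classical
  set n₁ := (pk X w (v+1)).toNat with hn₁
  set n₂ := (pk X u (w+1)).toNat with hn₂
  have hmain : (((n₁ * n₂ : ℕ)) : ℕ∞) ≤ pk X u v := by
    apply le_iInf
    intro x
    obtain ⟨T, hT, hTeq⟩ := exists_pack_max (pack_card_nat X w (v+1) x)
    have hn₁T : n₁ ≤ T.card := by
      have hle : pk X w (v+1) ≤ (T.card : ℕ∞) := hTeq ▸ iInf_le _ x
      have := ENat.toNat_le_toNat hle (by exact_mod_cast ENat.coe_lt_top T.card |>.ne)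
      simpa using this
    have hS : ∀ t : ↥X, ∃ s : Finset ↥X,
        IsPack ((2:ℝ)^(-u)) (Metric.closedBall t ((2:ℝ)^(-(w+1)))) s ∧ n₂ ≤ s.card := by
      intro t
      obtain ⟨s, hs, heq⟩ := exists_pack_max (pack_card_nat X u (w+1) t)
      refine ⟨s, hs, ?_⟩
      have hle : pk X u (w+1) ≤ (s.card : ℕ∞) := heq ▸ iInf_le _ t
      have := ENat.toNat_le_toNat hle (by exact_mod_cast ENat.coe_lt_top s.card |>.ne)
      simpa using this
    choose S hS1 hS2 using hS
    set U : Finset ↥X := T.biUnion S with hU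
    have hwu : (2:ℝ)^(-(w+1)) ≤ (2:ℝ)^(-(v+1)) := rpow2_mono (by linarith)
    have hdisjF : ∀ t₁ ∈ T, ∀ t₂ ∈ T, t₁ ≠ t₂ → Disjoint (S t₁) (S t₂) := by
      intro t₁ ht₁ t₂ ht₂ hne
      rw [Finset.disjoint_left]
      intro a ha1 ha2
      have d1 : dist a t₁ ≤ (2:ℝ)^(-(w+1)) := Metric.mem_closedBall.1 ((hS1 t₁).1 ha1)
      have d2 : dist a t₂ ≤ (2:ℝ)^(-(w+1)) := Metric.mem_closedBall.1 ((hS1 t₂).1 ha2)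
      have hsepT : 2 * (2:ℝ)^(-w) < dist t₁ t₂ := pack_sep hT (rpow2_pos _).le ht₁ ht₂ hne
      have htri : dist t₁ t₂ ≤ dist a t₁ + dist a t₂ := by
        rw [dist_comm a t₁]
        exact dist_triangle _ _ _
      have hw : (2:ℝ)^(-(w+1)) + (2:ℝ)^(-(w+1)) = (2:ℝ)^(-w) := rpow2_halves w
      have : 0 < (2:ℝ)^(-w) := rpow2_pos _
      linarith
    have hcardU : n₁ * n₂ ≤ U.card := by
      rw [hU, Finset.card_biUnion hdisjF]
      calc n₁ * n₂ ≤ T.card * n₂ := Nat.mul_le_mul_right _ hn₁T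
        _ = ∑ _t ∈ T, n₂ := by rw [Finset.sum_const, smul_eq_mul]
        _ ≤ ∑ t ∈ T, (S t).card := Finset.sum_le_sum (fun t _ => hS2 t)
    have hpackU : IsPack ((2:ℝ)^(-u)) (Metric.closedBall x ((2:ℝ)^(-v))) U := by
      constructor
      · intro a ha
        rw [Finset.mem_coe, hU, Finset.mem_biUnion] at ha
        obtain ⟨t, htT, haS⟩ := ha
        have d1 : dist a t ≤ (2:ℝ)^(-(w+1)) := Metric.mem_closedBall.1 ((hS1 t).1 haS)
        have d2 : dist t x ≤ (2:ℝ)^(-(v+1)) := Metric.mem_closedBall.1 (hT.1 htT)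
        have hv : (2:ℝ)^(-(v+1)) + (2:ℝ)^(-(v+1)) = (2:ℝ)^(-v) := rpow2_halves v
        refine Metric.mem_closedBall.2 ((dist_triangle a t x).trans ?_)
        linarith
      · intro a ha b hb hne
        rw [Finset.mem_coe, hU, Finset.mem_biUnion] at ha hb
        obtain ⟨t₁, ht₁, haS⟩ := ha
        obtain ⟨t₂, ht₂, hbS⟩ := hb
        by_cases hteq : t₁ = t₂
        · subst hteq
          exact (hS1 t₁).2 (Finset.mem_coe.2 haS) (Finset.mem_coe.2 hbS) hne
        · apply Metric.closedBall_disjoint_closedBall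
          have d1 : dist a t₁ ≤ (2:ℝ)^(-(w+1)) := Metric.mem_closedBall.1 ((hS1 t₁).1 haS)
          have d2 : dist b t₂ ≤ (2:ℝ)^(-(w+1)) := Metric.mem_closedBall.1 ((hS1 t₂).1 hbS)
          have hsepT : 2 * (2:ℝ)^(-w) < dist t₁ t₂ := pack_sep hT (rpow2_pos _).le ht₁ ht₂ hteq
          have htri : dist t₁ t₂ ≤ dist a t₁ + dist a b + dist b t₂ := by
            rw [dist_comm a t₁]
            calc dist t₁ t₂ ≤ dist t₁ a + dist a t₂ := dist_triangle _ _ _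
              _ ≤ dist t₁ a + (dist a b + dist b t₂) := by
                  have := dist_triangle a b t₂; linarith
              _ = dist t₁ a + dist a b + dist b t₂ := by ring
          have hw : (2:ℝ)^(-(w+1)) + (2:ℝ)^(-(w+1)) = (2:ℝ)^(-w) := rpow2_halves w
          have h4 : 4 * (2:ℝ)^(-u) ≤ (2:ℝ)^(-w) := by
            rw [rpow2_four u]
            exact rpow2_mono (by linarith)
          linarith
    have := le_packingNumber hpackU
    calc ((n₁ * n₂ : ℕ) : ℕ∞) ≤ (U.card : ℕ∞) := by exact_mod_cast hcardU
      _ ≤ _ := this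
  have htoNat : n₁ * n₂ ≤ (pk X u v).toNat := by
    have := ENat.toNat_le_toNat hmain (pk_ne_top X u v)
    simpa using this
  have hp1 : (0:ℝ) < (n₁ : ℝ) := hn₁ ▸ toNat_pk_pos X w (v+1)
  have hp2 : (0:ℝ) < (n₂ : ℝ) := hn₂ ▸ toNat_pk_pos X u (w+1)
  have hlog : Real.logb 2 ((n₁ : ℝ) * (n₂ : ℝ)) ≤ bet X u v := by
    apply (Real.logb_le_logb one_lt_two (mul_pos hp1 hp2) (toNat_pk_pos X u v)).2
    exact_mod_cast htoNat
  rw [Real.logb_mul hp1.ne' hp2.ne'] at hlog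
  exact hlog

end BFA
namespace BFA

variable {d : ℕ} (X : Set (EuclideanSpace ℝ (Fin d))) [Nonempty ↥X]

lemma exists_min_point (u t : ℝ) : ∃ x : ↥X,
    packingNumber ((2:ℝ)^(-u)) (Metric.closedBall x ((2:ℝ)^(-t))) = (((pk X u t).toNat : ℕ) : ℕ∞) := by
  set n := (pk X u t).toNat with hn
  have hco : pk X u t = (n : ℕ∞) := (ENat.coe_toNat (pk_ne_top X u t)).symm
  have hlt : pk X u t < ((n + 1 : ℕ) : ℕ∞) := by
    rw [hco]
    exact_mod_cast Nat.lt_succ_self n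
  obtain ⟨x, hx⟩ := iInf_lt_iff.1 hlt
  refine ⟨x, le_antisymm ?_ (hco ▸ iInf_le _ x)⟩
  have hxt : packingNumber ((2:ℝ)^(-u)) (Metric.closedBall x ((2:ℝ)^(-t))) ≠ ⊤ := by
    intro htop
    rw [htop] at hx
    exact (not_top_lt hx)
  set m := (packingNumber ((2:ℝ)^(-u)) (Metric.closedBall x ((2:ℝ)^(-t)))).toNat with hm
  have hcm : packingNumber ((2:ℝ)^(-u)) (Metric.closedBall x ((2:ℝ)^(-t))) = (m : ℕ∞) :=
    (ENat.coe_toNat hxt).symm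
  rw [hcm] at hx ⊢
  have : m < n + 1 := by exact_mod_cast hx
  exact_mod_cast Nat.lt_succ_iff.1 this

lemma logb_two_eight : Real.logb 2 (8:ℝ) = 3 := by
  have h : (8:ℝ) = (2:ℝ) ^ ((3:ℕ):ℝ) := by
    rw [Real.rpow_natCast]; norm_num
  rw [h, Real.logb_rpow two_pos (by norm_num)]
  norm_num

lemma bet_lip {u₁ u₂ : ℝ} (t : ℝ) (h : u₁ ≤ u₂) :
    bet X u₂ t ≤ bet X u₁ t + d * (u₂ - u₁) + 3 * d := by
  classical
  set n₁ := (pk X u₁ t).toNat with hn₁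
  obtain ⟨x, hx⟩ := exists_min_point X u₁ t
  obtain ⟨T, hT, hTeq⟩ := exists_pack_max (pack_card_nat X u₁ t x)
  have hTcard : T.card = n₁ := by
    have := hTeq.symm.trans hx
    exact_mod_cast this
  obtain ⟨S, hSp, hSeq⟩ := exists_pack_max (pack_card_nat X u₂ t x)
  have hpk2 : (pk X u₂ t).toNat ≤ S.card := by
    have hle : pk X u₂ t ≤ (S.card : ℕ∞) := hSeq ▸ iInf_le _ x
    have := ENat.toNat_le_toNat hle (by exact_mod_cast ENat.coe_lt_top S.card |>.ne)
    simpa using this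
  set r₁ := (2:ℝ)^(-u₁) with hr₁
  set r₂ := (2:ℝ)^(-u₂) with hr₂
  have hr₁p : 0 < r₁ := rpow2_pos _
  have hr₂p : 0 < r₂ := rpow2_pos _
  have hr21 : r₂ ≤ r₁ := rpow2_mono (neg_le_neg h)
  -- every point of S is near T
  have hnear : ∀ s ∈ S, ∃ t' ∈ T, dist s t' ≤ 4 * r₁ := by
    intro s hsS
    by_contra hc
    push_neg at hc
    have hsnotT : s ∉ T := by
      intro hmem
      have := hc s hmem
      simp only [dist_self] at this
      linarith
    have hins : IsPack r₁ (Metric.closedBall x ((2:ℝ)^(-t))) (insert s T) := by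
      constructor
      · intro a ha
        rw [Finset.coe_insert, Set.mem_insert_iff] at ha
        rcases ha with rfl | ha
        · exact hSp.1 hsS
        · exact hT.1 ha
      · intro a ha b hb hne
        rw [Finset.coe_insert, Set.mem_insert_iff] at ha hb
        rcases ha with rfl | ha
        · rcases hb with rfl | hb
          · exact absurd rfl hne
          · apply Metric.closedBall_disjoint_closedBall
            have := hc b hb
            linarith
        · rcases hb with rfl | hb
          · apply Metric.closedBall_disjoint_closedBall
            have := hc a ha
            rw [dist_comm]
            linarith
          · exact hT.2 ha hb hne
    have hcard := le_packingNumber hins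
    rw [hx, Finset.card_insert_of_notMem hsnotT, hTcard] at hcard
    have : n₁ + 1 ≤ n₁ := by exact_mod_cast hcard
    omega
  -- fiber counting
  have hfib : ∀ t' : ↥X, ((S.filter (fun s => dist s t' ≤ 4 * r₁)).card : ℝ)
      ≤ ((4 * r₁ + r₂) / r₂) ^ d := by
    intro t'
    apply card_le_of_separated' X _ t' hr₂p (by positivity)
    · intro p hp
      exact (Finset.mem_filter.1 hp).2
    · intro p hp q hq hpq
      exact pack_sep hSp hr₂p.le (Finset.mem_filter.1 hp).1 (Finset.mem_filter.1 hq).1 hpq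
  have hcount : (S.card : ℝ) ≤ (n₁ : ℝ) * ((4 * r₁ + r₂) / r₂) ^ d := by
    have hsub : S ⊆ T.biUnion (fun t' => S.filter (fun s => dist s t' ≤ 4 * r₁)) := by
      intro s hs
      obtain ⟨t', ht', hd⟩ := hnear s hs
      exact Finset.mem_biUnion.2 ⟨t', ht', Finset.mem_filter.2 ⟨hs, hd⟩⟩
    have h1 : S.card ≤ ∑ t' ∈ T, (S.filter (fun s => dist s t' ≤ 4 * r₁)).card :=
      (Finset.card_le_card hsub).trans Finset.card_biUnion_le
    calc (S.card : ℝ) ≤ ∑ t' ∈ T, ((S.filter (fun s => dist s t' ≤ 4 * r₁)).card : ℝ) := by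
          exact_mod_cast h1
      _ ≤ ∑ _t' ∈ T, ((4 * r₁ + r₂) / r₂) ^ d := Finset.sum_le_sum (fun t' _ => hfib t')
      _ = (T.card : ℝ) * ((4 * r₁ + r₂) / r₂) ^ d := by
          rw [Finset.sum_const, nsmul_eq_mul]
      _ = (n₁ : ℝ) * ((4 * r₁ + r₂) / r₂) ^ d := by rw [hTcard]
  -- arithmetic bound
  have harith : ((4 * r₁ + r₂) / r₂) ^ d ≤ (5 * (2:ℝ) ^ (u₂ - u₁)) ^ d := by
    apply pow_le_pow_left₀ (by positivity)
    have hnum : 4 * r₁ + r₂ ≤ 5 * r₁ := by linarith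
    have h51 : (4 * r₁ + r₂) / r₂ ≤ 5 * r₁ / r₂ := by gcongr
    have hval : 5 * r₁ / r₂ = 5 * (2:ℝ) ^ (u₂ - u₁) := by
      rw [mul_div_assoc]
      congr 1
      rw [hr₁, hr₂, ← Real.rpow_sub two_pos, show -u₁ - -u₂ = u₂ - u₁ by ring]
    rw [hval] at h51
    exact h51
  have hn₁pos : (0:ℝ) < (n₁ : ℝ) := hn₁ ▸ toNat_pk_pos X u₁ t
  have hkey : (((pk X u₂ t).toNat : ℕ) : ℝ) ≤ (n₁:ℝ) * (5 * (2:ℝ) ^ (u₂ - u₁)) ^ d := by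
    calc (((pk X u₂ t).toNat : ℕ) : ℝ) ≤ (S.card : ℝ) := by exact_mod_cast hpk2
      _ ≤ (n₁ : ℝ) * ((4 * r₁ + r₂) / r₂) ^ d := hcount
      _ ≤ (n₁:ℝ) * (5 * (2:ℝ) ^ (u₂ - u₁)) ^ d :=
          mul_le_mul_of_nonneg_left harith hn₁pos.le
  have hb : bet X u₂ t ≤ Real.logb 2 ((n₁:ℝ) * (5 * (2:ℝ) ^ (u₂ - u₁)) ^ d) := by
    apply (Real.logb_le_logb one_lt_two (toNat_pk_pos X u₂ t) (by positivity)).2 hkey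
  have hBpos : (0:ℝ) < 5 * (2:ℝ) ^ (u₂ - u₁) := by positivity
  rw [Real.logb_mul hn₁pos.ne' (by positivity), Real.logb_pow,
    Real.logb_mul (by norm_num) (rpow2_pos _).ne', Real.logb_rpow two_pos (by norm_num)] at hb
  have hlog5 : Real.logb 2 (5:ℝ) ≤ 3 := by
    have h58 : Real.logb 2 (5:ℝ) ≤ Real.logb 2 (8:ℝ) :=
      (Real.logb_le_logb one_lt_two (by norm_num) (by norm_num)).2 (by norm_num)
    rw [logb_two_eight] at h58
    exact h58
  have hbet1 : bet X u₁ t = Real.logb 2 (n₁ : ℝ) := by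
    simp only [bet, hn₁]
  have hd0 : (0:ℝ) ≤ (d:ℝ) := Nat.cast_nonneg d
  have hdl : (d:ℝ) * Real.logb 2 (5:ℝ) ≤ (d:ℝ) * 3 := mul_le_mul_of_nonneg_left hlog5 hd0
  rw [hbet1]
  nlinarith [hb]

end BFA
namespace BFA

variable {d : ℕ} (X : Set (EuclideanSpace ℝ (Fin d)))

/-- link cost -/
def cL (s t : ℝ) : ℝ := bet X s (t + 2)

/-- sum of link costs along a chain -/
def chainSum : ℝ → List ℝ → ℝ
  | _, [] => 0
  | a, b :: l => cL X b a + chainSum b l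

def chainSet (u v : ℝ) : Set ℝ :=
  {x | ∃ l : List ℝ, List.Chain (· ≤ ·) v (l ++ [u]) ∧ x = chainSum X v (l ++ [u])}

def f0 (u v : ℝ) : ℝ := sSup (chainSet X u v)

lemma chain_cons' {R : ℝ → ℝ → Prop} {a b : ℝ} {l : List ℝ} :
    List.Chain R a (b :: l) ↔ R a b ∧ List.Chain R b l := List.isChain_cons_cons

lemma chain_singleton' {R : ℝ → ℝ → Prop} {a b : ℝ} :
    List.Chain R a [b] ↔ R a b := by
  simp [List.Chain]

lemma chain_le_last : ∀ (l : List ℝ) (a u : ℝ), List.Chain (· ≤ ·) a (l ++ [u]) → a ≤ u := by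
  intro l
  induction l with
  | nil => intro a u h; exact (chain_cons'.1 h).1
  | cons c l ih =>
    intro a u h
    rw [List.cons_append, chain_cons'] at h
    exact h.1.trans (ih c u h.2)

lemma chainSum_append (l₂ : List ℝ) (w : ℝ) :
    ∀ (l₁ : List ℝ) (a : ℝ),
      chainSum X a (l₁ ++ w :: l₂) = chainSum X a (l₁ ++ [w]) + chainSum X w l₂ := by
  intro l₁
  induction l₁ with
  | nil => intro a; simp [chainSum]
  | cons c l₁ ih =>
    intro a
    rw [List.cons_append, List.cons_append]
    show cL X c a + chainSum X c (l₁ ++ w :: l₂)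
      = cL X c a + chainSum X c (l₁ ++ [w]) + chainSum X w l₂
    rw [ih c]
    ring

lemma chain_append_le (l₂ : List ℝ) (w : ℝ) (h₂ : List.Chain (· ≤ ·) w l₂) :
    ∀ (l₁ : List ℝ) (a : ℝ), List.Chain (· ≤ ·) a (l₁ ++ [w]) →
      List.Chain (· ≤ ·) a (l₁ ++ [w] ++ l₂) := by
  intro l₁
  induction l₁ with
  | nil =>
    intro a h
    rw [List.nil_append] at h ⊢
    rw [List.singleton_append, chain_cons']
    exact ⟨(chain_cons'.1 h).1, h₂⟩
  | cons c l₁ ih =>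
    intro a h
    rw [List.cons_append] at h
    rw [List.cons_append, List.cons_append, chain_cons']
    rw [chain_cons'] at h
    exact ⟨h.1, by have := ih c h.2; rwa [List.append_assoc, List.singleton_append] at this ⊢⟩

variable [Nonempty ↥X]

lemma chainSum_zero : ∀ (l : List ℝ) (a u : ℝ), List.Chain (· ≤ ·) a (l ++ [u]) →
    u ≤ a + 2 → chainSum X a (l ++ [u]) = 0 := by
  intro l
  induction l with
  | nil =>
    intro a u _ h2
    simp only [List.nil_append, chainSum, cL]
    rw [bet_triv X h2]
    ring
  | cons b l ih =>
    intro a u hc h2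
    rw [List.cons_append, chain_cons'] at hc
    have hbu : b ≤ u := chain_le_last l b u hc.2
    rw [List.cons_append]
    show cL X b a + chainSum X b (l ++ [u]) = 0
    rw [ih b u hc.2 (by linarith), cL, bet_triv X (by linarith)]
    ring

lemma chainSum_claim : ∀ (l : List ℝ) (a u : ℝ), List.Chain (· ≤ ·) a (l ++ [u]) →
    chainSum X a (l ++ [u]) ≤ bet X u (a + 1) := by
  intro l
  induction l with
  | nil =>
    intro a u _
    simp only [List.nil_append, chainSum, cL, add_zero]
    exact bet_anti_v X u (by linarith)
  | cons m l ih =>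
    intro a u hc
    rw [List.cons_append, chain_cons'] at hc
    obtain ⟨ham, hc2⟩ := hc
    have hmu : m ≤ u := chain_le_last l m u hc2
    have hih := ih m u hc2
    rw [List.cons_append]
    show cL X m a + chainSum X m (l ++ [u]) ≤ bet X u (a + 1)
    by_cases h1 : m < a + 1
    · have hz : cL X m a = 0 := bet_triv X (by linarith)
      have hmono : bet X u (m + 1) ≤ bet X u (a + 1) := bet_anti_v X u (by linarith)
      linarith
    · push_neg at h1
      by_cases h2 : u ≤ m + 2
      · have hz : chainSum X m (l ++ [u]) = 0 := chainSum_zero X l m u hc2 h2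
        have hmono : cL X m a ≤ bet X u (a + 2) := bet_mono_u X (a + 2) hmu
        have hmono2 : bet X u (a + 2) ≤ bet X u (a + 1) := bet_anti_v X u (by linarith)
        rw [hz]
        simp only [cL] at hmono ⊢
        linarith
      · push_neg at h2
        have hsup := bet_super X (v := a + 1) (w := m) (u := u) h1 h2
        have : cL X m a = bet X m ((a + 1) + 1) := by
          rw [cL]
          ring_nf
        linarith

lemma single_mem_chainSet {u v : ℝ} (h : v ≤ u) : cL X u v ∈ chainSet X u v := by
  refine ⟨[], ?_, ?_⟩
  · rw [List.nil_append]
    exact chain_singleton'.2 h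
  · simp [chainSum]

lemma chainSet_nonempty {u v : ℝ} (h : v ≤ u) : (chainSet X u v).Nonempty :=
  ⟨_, single_mem_chainSet X h⟩

lemma chainSet_bddAbove (u v : ℝ) : BddAbove (chainSet X u v) := by
  refine ⟨bet X u (v + 1), ?_⟩
  rintro x ⟨l, hc, rfl⟩
  exact chainSum_claim X l v u hc

lemma f0_le_bet (u v : ℝ) (h : v ≤ u) : f0 X u v ≤ bet X u (v + 1) :=
  csSup_le (chainSet_nonempty X h) (by rintro x ⟨l, hc, rfl⟩; exact chainSum_claim X l v u hc)

lemma bet_le_f0 {u v : ℝ} (h : v ≤ u) : bet X u (v + 2) ≤ f0 X u v :=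
  le_csSup (chainSet_bddAbove X u v) (single_mem_chainSet X h)

lemma f0_nonneg {u v : ℝ} (h : v ≤ u) : 0 ≤ f0 X u v :=
  (bet_nonneg X u (v + 2)).trans (bet_le_f0 X h)

lemma f0_diag (u : ℝ) : f0 X u u = 0 :=
  le_antisymm ((f0_le_bet X u u le_rfl).trans_eq (bet_triv X (by linarith)))
    (f0_nonneg X le_rfl)

lemma f0_mono_u {u₁ u₂ v : ℝ} (h : u₁ ≤ u₂) (hv : v ≤ u₁) : f0 X u₁ v ≤ f0 X u₂ v := by
  apply csSup_le (chainSet_nonempty X hv)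
  rintro x ⟨l, hc, rfl⟩
  have hmem : chainSum X v (l ++ [u₁]) + cL X u₂ u₁ ∈ chainSet X u₂ v := by
    refine ⟨l ++ [u₁], ?_, ?_⟩
    · exact chain_append_le [u₂] u₁ (chain_singleton'.2 h) l v hc
    · rw [List.append_assoc, List.singleton_append, chainSum_append X [u₂] u₁ l v]
      simp [chainSum]
  have hle := le_csSup (chainSet_bddAbove X u₂ v) hmem
  have hcl : 0 ≤ cL X u₂ u₁ := bet_nonneg X _ _
  unfold f0
  linarith

lemma add_mem_chainSet {u v w x y : ℝ} (hx : x ∈ chainSet X w v) (hy : y ∈ chainSet X u w) :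
    x + y ∈ chainSet X u v := by
  obtain ⟨l₁, hc₁, rfl⟩ := hx
  obtain ⟨l₂, hc₂, rfl⟩ := hy
  refine ⟨l₁ ++ w :: l₂, ?_, ?_⟩
  · have heq : (l₁ ++ w :: l₂) ++ [u] = l₁ ++ [w] ++ (l₂ ++ [u]) := by simp
    rw [heq]
    exact chain_append_le (l₂ ++ [u]) w hc₂ l₁ v hc₁
  · have heq : (l₁ ++ w :: l₂) ++ [u] = l₁ ++ w :: (l₂ ++ [u]) := by simp
    rw [heq, chainSum_append X (l₂ ++ [u]) w l₁ v]

lemma f0_super {u v w : ℝ} (hvw : v ≤ w) (hwu : w ≤ u) :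
    f0 X u w + f0 X w v ≤ f0 X u v := by
  have key : ∀ y ∈ chainSet X u w, f0 X w v + y ≤ f0 X u v := by
    intro y hy
    have h1 : ∀ x ∈ chainSet X w v, x ≤ f0 X u v - y := by
      intro x hx
      have := le_csSup (chainSet_bddAbove X u v) (add_mem_chainSet X hx hy)
      unfold f0 at *
      linarith
    have := csSup_le (chainSet_nonempty X hvw) h1
    unfold f0 at *
    linarith
  have h2 : ∀ y ∈ chainSet X u w, y ≤ f0 X u v - f0 X w v := by
    intro y hy
    have := key y hy
    linarith
  have := csSup_le (chainSet_nonempty X hwu) h2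
  unfold f0 at *
  linarith

end BFA

namespace BFA

variable {d : ℕ} (X : Set (EuclideanSpace ℝ (Fin d)))

/-- The Lipschitz regularization of `f0`. -/
def FF (α : ℝ) (u v : ℝ) : ℝ :=
  if v ≤ u then sInf ((fun w => f0 X w v + α * (u - w)) '' Set.Icc v u) else 0

variable [Nonempty ↥X] {α : ℝ}

lemma FF_bddBelow (hα : 0 ≤ α) (u v : ℝ) :
    BddBelow ((fun w => f0 X w v + α * (u - w)) '' Set.Icc v u) := by
  refine ⟨0, ?_⟩
  rintro x ⟨w, hw, rfl⟩
  have h1 : 0 ≤ f0 X w v := f0_nonneg X hw.1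
  have h2 : 0 ≤ α * (u - w) := mul_nonneg hα (by linarith [hw.2])
  positivity

lemma FF_le_elem (hα : 0 ≤ α) {u v w : ℝ} (hw : w ∈ Set.Icc v u) :
    FF X α u v ≤ f0 X w v + α * (u - w) := by
  rw [FF, if_pos (hw.1.trans hw.2)]
  exact csInf_le (FF_bddBelow X hα u v) ⟨w, hw, rfl⟩

lemma le_FF {b : ℝ} {u v : ℝ} (hvu : v ≤ u)
    (h : ∀ w ∈ Set.Icc v u, b ≤ f0 X w v + α * (u - w)) : b ≤ FF X α u v := by
  rw [FF, if_pos hvu]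
  apply le_csInf ((Set.nonempty_Icc.2 hvu).image _)
  rintro x ⟨w, hw, rfl⟩
  exact h w hw

lemma FF_nonneg (hα : 0 ≤ α) {u v : ℝ} (hvu : v ≤ u) : 0 ≤ FF X α u v := by
  apply le_FF X hvu
  intro w hw
  have h1 : 0 ≤ f0 X w v := f0_nonneg X hw.1
  have h2 : 0 ≤ α * (u - w) := mul_nonneg hα (by linarith [hw.2])
  linarith

lemma FF_le_f0 (hα : 0 ≤ α) {u v : ℝ} (hvu : v ≤ u) : FF X α u v ≤ f0 X u v := by
  have := FF_le_elem X hα (w := u) (Set.right_mem_Icc.2 hvu)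
  simpa using this

lemma FF_diag (hα : 0 ≤ α) (u : ℝ) : FF X α u u = 0 :=
  le_antisymm ((FF_le_f0 X hα le_rfl).trans_eq (f0_diag X u)) (FF_nonneg X hα le_rfl)

lemma FF_super (hα : 0 ≤ α) {u v w : ℝ} (hvw : v ≤ w) (hwu : w ≤ u) :
    FF X α u w + FF X α w v ≤ FF X α u v := by
  apply le_FF X (hvw.trans hwu)
  intro w' hw'
  rcases le_total w w' with hcase | hcase
  · have hsup : f0 X w' w + f0 X w v ≤ f0 X w' v := f0_super X hvw hcase
    have h1 : FF X α u w ≤ f0 X w' w + α * (u - w') :=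
      FF_le_elem X hα ⟨hcase, hw'.2⟩
    have h2 : FF X α w v ≤ f0 X w v := FF_le_f0 X hα hvw
    linarith
  · have h1 : FF X α w v ≤ f0 X w' v + α * (w - w') :=
      FF_le_elem X hα ⟨hw'.1, hcase⟩
    have h2 : FF X α u w ≤ α * (u - w) := by
      have := FF_le_elem X hα (w := w) (u := u) (v := w) (Set.left_mem_Icc.2 hwu)
      rw [f0_diag X w] at this
      simpa using this
    have : α * (w - w') + α * (u - w) = α * (u - w') := by ring
    linarith

lemma FF_mono_u (hα : 0 ≤ α) {u₁ u₂ v : ℝ} (hv : v ≤ u₁) (h : u₁ ≤ u₂) :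
    FF X α u₁ v ≤ FF X α u₂ v := by
  apply le_FF X (hv.trans h)
  intro w hw
  rcases le_total w u₁ with hcase | hcase
  · have h1 : FF X α u₁ v ≤ f0 X w v + α * (u₁ - w) := FF_le_elem X hα ⟨hw.1, hcase⟩
    have h2 : α * (u₁ - w) ≤ α * (u₂ - w) := mul_le_mul_of_nonneg_left (by linarith) hα
    linarith
  · have h1 : FF X α u₁ v ≤ f0 X u₁ v := FF_le_f0 X hα hv
    have h2 : f0 X u₁ v ≤ f0 X w v := f0_mono_u X hcase hv
    have h3 : 0 ≤ α * (u₂ - w) := mul_nonneg hα (by linarith [hw.2])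
    linarith

lemma FF_lip (hα : 0 ≤ α) {u₁ u₂ v : ℝ} (hv : v ≤ u₁) (h : u₁ ≤ u₂) :
    FF X α u₂ v ≤ FF X α u₁ v + α * (u₂ - u₁) := by
  have key : FF X α u₂ v - α * (u₂ - u₁) ≤ FF X α u₁ v := by
    apply le_FF X hv
    intro w hw
    have h1 : FF X α u₂ v ≤ f0 X w v + α * (u₂ - w) :=
      FF_le_elem X hα ⟨hw.1, hw.2.trans h⟩
    have : f0 X w v + α * (u₂ - w) = (f0 X w v + α * (u₁ - w)) + α * (u₂ - u₁) := by ring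
    linarith
  linarith

lemma memL_FF (hα : 0 ≤ α) : MemL α (fun u v => FF X α u v) := by
  refine ⟨fun u v h => FF_nonneg X hα h, fun u => FF_diag X hα u,
    fun u w v h1 h2 => FF_super X hα h1 h2, ?_⟩
  intro v u₁ u₂ h1 h2
  rcases le_total u₁ u₂ with h | h
  · have e1 := FF_mono_u X hα h1 h
    have e2 := FF_lip X hα h1 h
    have habs : |u₁ - u₂| = u₂ - u₁ := by rw [abs_sub_comm]; exact abs_of_nonneg (by linarith)
    rw [habs]
    rw [abs_le]
    constructor <;> nlinarith
  · have e1 := FF_mono_u X hα h2 h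
    have e2 := FF_lip X hα h2 h
    have habs : |u₁ - u₂| = u₁ - u₂ := abs_of_nonneg (by linarith)
    rw [habs]
    rw [abs_le]
    constructor <;> nlinarith

lemma brL_eq (u v : ℝ) : brL ↥X u v = ENNReal.ofReal (bet X u v) := by
  have h : (⨅ x : ↥X, packingNumber ((2:ℝ)^(-u)) (Metric.closedBall x ((2:ℝ)^(-v)))) = pk X u v :=
    rfl
  rw [brL, h, elog2, if_neg (pk_ne_top X u v)]
  rfl

end BFA

/-- Every nonempty `X ⊆ ℝ^d` has branching function equivalent (with constant
depending only on `d`) to a member of `L(d)`. -/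
theorem branching_function_approx (d : ℕ) (hd : 0 < d) :
    ∃ z : ℝ, 0 ≤ z ∧ ∀ X : Set (EuclideanSpace ℝ (Fin d)), X.Nonempty →
      ∃ f : ℝ → ℝ → ℝ, MemL d f ∧
        ∀ u v : ℝ, 0 ≤ v → v ≤ u →
          (v ≤ u - z → ENNReal.ofReal (f u (v + z) - z) ≤ brL X u v) ∧
          (z ≤ v → brL X u v ≤ ENNReal.ofReal (f u (v - z) + z)) := by
  refine ⟨3 * d + 3, by positivity, ?_⟩
  intro X hX
  haveI : Nonempty ↥X := hX.to_subtype
  have hα : (0:ℝ) ≤ (d:ℝ) := Nat.cast_nonneg d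
  refine ⟨fun u v => BFA.FF X (d:ℝ) u v, BFA.memL_FF X hα, ?_⟩
  intro u v hv0 hvu
  have hz3 : (0:ℝ) ≤ 3 * d + 3 := by positivity
  constructor
  · intro hvz
    rw [BFA.brL_eq X u v]
    apply ENNReal.ofReal_le_ofReal
    have hvzu : v + (3 * d + 3) ≤ u := by linarith
    have h1 : BFA.FF X (d:ℝ) u (v + (3 * d + 3)) ≤ BFA.f0 X u (v + (3 * d + 3)) :=
      BFA.FF_le_f0 X hα hvzu
    have h2 : BFA.f0 X u (v + (3 * d + 3)) ≤ BFA.bet X u (v + (3 * d + 3) + 1) :=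
      BFA.f0_le_bet X u (v + (3 * d + 3)) hvzu
    have h3 : BFA.bet X u (v + (3 * d + 3) + 1) ≤ BFA.bet X u v :=
      BFA.bet_anti_v X u (by linarith)
    linarith
  · intro hzv
    rw [BFA.brL_eq X u v]
    apply ENNReal.ofReal_le_ofReal
    have hkey : BFA.bet X u v - 3 * d ≤ BFA.FF X (d:ℝ) u (v - (3 * d + 3)) := by
      apply BFA.le_FF X (by linarith)
      intro w hw
      have h1 : BFA.bet X w (v - (3 * d + 3) + 2) ≤ BFA.f0 X w (v - (3 * d + 3)) :=
        BFA.bet_le_f0 X hw.1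
      have h2 : BFA.bet X u v ≤ BFA.bet X w v + d * (u - w) + 3 * d :=
        BFA.bet_lip X v hw.2
      have h3 : BFA.bet X w v ≤ BFA.bet X w (v - (3 * d + 3) + 2) :=
        BFA.bet_anti_v X w (by linarith)
      linarith
    linarith

end
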